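/- Every rook cycle in [n]^ℓ is a symmetric-difference sum of finitely many parallelepipeds. -/

import Mathlib

/-- A rook cycle in `[n]^ℓ` is a subset containing an even number of points of every
row, where a row is obtained by fixing all coordinates except one. -/
def IsRookCycle (n ℓ : ℕ) (C : Finset (Fin ℓ → Fin n)) : Prop :=
  ∀ (i : Fin ℓ) (x : Fin ℓ → Fin n),
    Even (C.filter (fun y => ∀ j, j ≠ i → y j = x j)).card

section aux

variable {n ℓ : ℕ}

/-- encoding of a point, monotone wrt product order and injective -/
def rcEnc (y : Fin ℓ → Fin n) : ℕ := ∑ i : Fin ℓ, (y i : ℕ) * n ^ (i : ℕ)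

lemma rcEnc_inj : Function.Injective (rcEnc (n := n) (ℓ := ℓ)) := by
  intro a b hab
  apply finFunctionFinEquiv.injective
  apply Fin.val_injective
  rw [finFunctionFinEquiv_apply, finFunctionFinEquiv_apply]
  exact hab

lemma sum_two_pow_lt (m : ℕ) : ∑ k ∈ Finset.range m, 2 ^ k < 2 ^ m := by
  induction m with
  | zero => simp
  | succ m ih =>
    rw [Finset.sum_range_succ, pow_succ]
    omega

lemma filter_symmDiff' (p : (Fin ℓ → Fin n) → Prop) [DecidablePred p]
    (A B : Finset (Fin ℓ → Fin n)) :
    (symmDiff A B).filter p = symmDiff (A.filter p) (B.filter p) := by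
  ext y
  simp only [Finset.mem_filter, Finset.mem_symmDiff]
  tauto

lemma even_card_symmDiff {A B : Finset (Fin ℓ → Fin n)}
    (hA : Even A.card) (hB : Even B.card) : Even ((symmDiff A B).card) := by
  classical
  have h1 : symmDiff A B = (A \ B) ∪ (B \ A) := by
    ext y; simp only [Finset.mem_symmDiff, Finset.mem_union, Finset.mem_sdiff]
  have hd : Disjoint (A \ B) (B \ A) := by
    rw [Finset.disjoint_left]; intro a ha hb
    simp only [Finset.mem_sdiff] at ha hb; exact hb.2 ha.1
  have hAc : (A \ B).card + (A ∩ B).card = A.card := Finset.card_sdiff_add_card_inter A B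
  have hBc : (B \ A).card + (B ∩ A).card = B.card := Finset.card_sdiff_add_card_inter B A
  have hcc : (symmDiff A B).card = (A \ B).card + (B \ A).card := by
    rw [h1, Finset.card_union_of_disjoint hd]
  rw [Finset.inter_comm] at hBc
  rw [hcc]
  rcases hA with ⟨a, ha⟩; rcases hB with ⟨b, hb⟩
  exact ⟨a + b - (A ∩ B).card, by omega⟩

lemma rookCycle_symmDiff {A B : Finset (Fin ℓ → Fin n)}
    (hA : IsRookCycle n ℓ A) (hB : IsRookCycle n ℓ B) : IsRookCycle n ℓ (symmDiff A B) := by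
  intro i x
  rw [filter_symmDiff']
  exact even_card_symmDiff (hA i x) (hB i x)

lemma rookCycle_piFinset {P : Fin ℓ → Finset (Fin n)} (hP : ∀ i, (P i).card = 2) :
    IsRookCycle n ℓ (Fintype.piFinset P) := by
  classical
  intro i x
  by_cases hx : ∀ j, j ≠ i → x j ∈ P j
  · have he : (Fintype.piFinset P).filter (fun y => ∀ j, j ≠ i → y j = x j)
        = (P i).image (fun a => Function.update x i a) := by
      ext y
      simp only [Finset.mem_filter, Fintype.mem_piFinset, Finset.mem_image]
      constructor
      · rintro ⟨h1, h2⟩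
        refine ⟨y i, h1 i, ?_⟩
        funext j
        by_cases hj : j = i
        · subst hj; simp
        · rw [Function.update_of_ne hj]; exact (h2 j hj).symm
      · rintro ⟨a, ha, rfl⟩
        constructor
        · intro j
          by_cases hj : j = i
          · subst hj; simpa using ha
          · rw [Function.update_of_ne hj]; exact hx j hj
        · intro j hj; rw [Function.update_of_ne hj]
    rw [he, Finset.card_image_of_injective _ (fun a b hab => by
      have := congrFun hab i; simpa using this), hP i]
    exact even_two
  · have he : (Fintype.piFinset P).filter (fun y => ∀ j, j ≠ i → y j = x j) = ∅ := by
      rw [Finset.filter_eq_empty_iff]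
      intro y hy hcon
      push_neg at hx
      obtain ⟨j, hj, hxj⟩ := hx
      exact hxj (hcon j hj ▸ (Fintype.mem_piFinset.mp hy j))
    rw [he]; simp

lemma rc_main (N : ℕ) : ∀ C : Finset (Fin ℓ → Fin n),
    (∑ y ∈ C, 2 ^ rcEnc y) < N → IsRookCycle n ℓ C →
    ∃ l : List (Fin ℓ → Finset (Fin n)),
      (∀ P ∈ l, ∀ i, (P i).card = 2) ∧
      C = (l.map Fintype.piFinset).foldr symmDiff ∅ := by
  classical
  induction N with
  | zero => intro C h; omega
  | succ N ih =>
    intro C hm hC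
    rcases Finset.eq_empty_or_nonempty C with rfl | hne
    · exact ⟨[], by simp, by simp⟩
    obtain ⟨x, hxC, hxmax⟩ := Finset.exists_max_image C rcEnc hne
    -- every coordinate of x is positive
    have hpos : ∀ i : Fin ℓ, 0 < (x i : ℕ) := by
      intro i
      have heven := hC i x
      have hx_mem : x ∈ C.filter (fun y => ∀ j, j ≠ i → y j = x j) :=
        Finset.mem_filter.mpr ⟨hxC, fun j _ => rfl⟩
      have h2 : 1 < (C.filter (fun y => ∀ j, j ≠ i → y j = x j)).card := by
        rcases heven with ⟨k, hk⟩
        have hcp : 0 < (C.filter (fun y => ∀ j, j ≠ i → y j = x j)).card :=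
          Finset.card_pos.mpr ⟨x, hx_mem⟩
        generalize hg : (C.filter (fun y => ∀ j, j ≠ i → y j = x j)).card = c at hk hcp ⊢
        clear * - hk hcp
        omega
      obtain ⟨z, hz, hzx⟩ := Finset.exists_mem_ne h2 x
      rw [Finset.mem_filter] at hz
      have hzle : rcEnc z ≤ rcEnc x := hxmax z hz.1
      have hcoord : ∀ j, j ≠ i → z j = x j := hz.2
      have hzi : z i ≠ x i := by
        intro h
        apply hzx; funext j
        by_cases hj : j = i
        · subst hj; exact h
        · exact hcoord j hj
      have hkey : (z i : ℕ) * n ^ (i : ℕ) ≤ (x i : ℕ) * n ^ (i : ℕ) := by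
        unfold rcEnc at hzle
        have hsplit : ∀ w : Fin ℓ → Fin n,
            ∑ j : Fin ℓ, (w j : ℕ) * n ^ (j : ℕ) =
            (w i : ℕ) * n ^ (i : ℕ) + ∑ j ∈ Finset.univ.erase i, (w j : ℕ) * n ^ (j : ℕ) := by
          intro w
          exact (Finset.add_sum_erase _ _ (Finset.mem_univ i)).symm
        rw [hsplit z, hsplit x] at hzle
        have heq : ∑ j ∈ Finset.univ.erase i, (z j : ℕ) * n ^ (j : ℕ)
            = ∑ j ∈ Finset.univ.erase i, (x j : ℕ) * n ^ (j : ℕ) := by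
          apply Finset.sum_congr rfl
          intro j hj
          rw [hcoord j (Finset.ne_of_mem_erase hj)]
        rw [heq] at hzle
        exact le_of_add_le_add_right hzle
      have hnpos : 0 < n ^ (i : ℕ) := Nat.pow_pos (x i).pos
      have h1 : (z i : ℕ) ≤ (x i : ℕ) := Nat.le_of_mul_le_mul_right hkey hnpos
      have h2 : (z i : ℕ) < (x i : ℕ) := lt_of_le_of_ne h1 (fun h => hzi (Fin.ext h))
      exact lt_of_le_of_lt (Nat.zero_le _) h2
    -- the parallelepiped
    set P : Fin ℓ → Finset (Fin n) := fun i => {⟨0, (x i).pos⟩, x i} with hPdef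
    have hPcard : ∀ i, (P i).card = 2 := by
      intro i
      rw [hPdef]
      rw [Finset.card_insert_of_notMem, Finset.card_singleton]
      simp only [Finset.mem_singleton]
      intro h
      have := hpos i
      rw [← h] at this
      simp at this
    set Q := Fintype.piFinset P with hQdef
    have hxQ : x ∈ Q := by
      rw [hQdef, Fintype.mem_piFinset]
      intro i; simp [hPdef]
    have hQlt : ∀ y ∈ Q, y ≠ x → rcEnc y < rcEnc x := by
      intro y hy hyx
      rw [hQdef, Fintype.mem_piFinset] at hy
      have hle : ∀ i, (y i : ℕ) ≤ (x i : ℕ) := by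
        intro i
        have := hy i
        simp only [hPdef, Finset.mem_insert, Finset.mem_singleton] at this
        rcases this with h | h
        · rw [h]; exact Nat.zero_le _
        · rw [h]
      obtain ⟨j, hj⟩ : ∃ j, y j ≠ x j := by
        by_contra h; push_neg at h; exact hyx (funext h)
      have hjlt : (y j : ℕ) < (x j : ℕ) :=
        lt_of_le_of_ne (hle j) (fun h => hj (Fin.ext h))
      unfold rcEnc
      apply Finset.sum_lt_sum (fun i _ => Nat.mul_le_mul_right _ (hle i))
      exact ⟨j, Finset.mem_univ j, (Nat.mul_lt_mul_right (Nat.pow_pos (x j).pos)).mpr hjlt⟩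
    -- measure decrease
    have hmeas : (∑ y ∈ symmDiff C Q, 2 ^ rcEnc y) < ∑ y ∈ C, 2 ^ rcEnc y := by
      have hsd : symmDiff C Q = (C \ Q) ∪ (Q \ C) := by
        ext y; simp only [Finset.mem_symmDiff, Finset.mem_union, Finset.mem_sdiff]
      have hd : Disjoint (C \ Q) (Q \ C) := by
        rw [Finset.disjoint_left]; intro a ha hb
        simp only [Finset.mem_sdiff] at ha hb; exact hb.2 ha.1
      rw [hsd, Finset.sum_union hd]
      have hCsplit : (∑ y ∈ C \ Q, 2 ^ rcEnc y) + (∑ y ∈ C ∩ Q, 2 ^ rcEnc y)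
          = ∑ y ∈ C, 2 ^ rcEnc y := by
        rw [← Finset.sum_union (Finset.disjoint_sdiff_inter C Q), Finset.sdiff_union_inter]
      have hQC : ∑ y ∈ Q \ C, 2 ^ rcEnc y ≤ ∑ y ∈ Q.erase x, 2 ^ rcEnc y := by
        apply Finset.sum_le_sum_of_subset
        intro y hy
        simp only [Finset.mem_sdiff] at hy
        exact Finset.mem_erase.mpr ⟨fun h => hy.2 (h ▸ hxC), hy.1⟩
      have herase : ∑ y ∈ Q.erase x, 2 ^ rcEnc y < 2 ^ rcEnc x := by
        have himg : ∑ y ∈ Q.erase x, 2 ^ rcEnc y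
            = ∑ k ∈ (Q.erase x).image rcEnc, 2 ^ k := by
          rw [Finset.sum_image (fun a _ b _ h => rcEnc_inj h)]
        rw [himg]
        calc ∑ k ∈ (Q.erase x).image rcEnc, 2 ^ k
            ≤ ∑ k ∈ Finset.range (rcEnc x), 2 ^ k := by
              apply Finset.sum_le_sum_of_subset
              intro k hk
              simp only [Finset.mem_image] at hk
              obtain ⟨y, hy, rfl⟩ := hk
              rw [Finset.mem_erase] at hy
              exact Finset.mem_range.mpr (hQlt y hy.2 hy.1)
          _ < 2 ^ rcEnc x := sum_two_pow_lt _
      have hxmem : x ∈ C ∩ Q := Finset.mem_inter.mpr ⟨hxC, hxQ⟩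
      have hge : 2 ^ rcEnc x ≤ ∑ y ∈ C ∩ Q, 2 ^ rcEnc y :=
        Finset.single_le_sum (f := fun y => 2 ^ rcEnc y) (fun y _ => Nat.zero_le _) hxmem
      calc (∑ y ∈ C \ Q, 2 ^ rcEnc y) + ∑ y ∈ Q \ C, 2 ^ rcEnc y
          < (∑ y ∈ C \ Q, 2 ^ rcEnc y) + ∑ y ∈ C ∩ Q, 2 ^ rcEnc y :=
            Nat.add_lt_add_left (lt_of_le_of_lt hQC (lt_of_lt_of_le herase hge)) _
        _ = ∑ y ∈ C, 2 ^ rcEnc y := hCsplit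
    have hC' : IsRookCycle n ℓ (symmDiff C Q) :=
      rookCycle_symmDiff hC (rookCycle_piFinset hPcard)
    obtain ⟨l, hl1, hl2⟩ := ih (symmDiff C Q) (by omega) hC'
    refine ⟨P :: l, ?_, ?_⟩
    · intro P' hP' i
      rcases List.mem_cons.mp hP' with rfl | h
      · exact hPcard i
      · exact hl1 P' h i
    · simp only [List.map_cons, List.foldr_cons, ← hl2, ← hQdef]
      rw [symmDiff_comm, symmDiff_symmDiff_cancel_right]
end aux

theorem isRookCycle_eq_sum_of_parallelepipeds (n ℓ : ℕ) (C : Finset (Fin ℓ → Fin n))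
    (hC : IsRookCycle n ℓ C) :
    ∃ l : List (Fin ℓ → Finset (Fin n)),
      (∀ P ∈ l, ∀ i, (P i).card = 2) ∧
      C = (l.map Fintype.piFinset).foldr symmDiff ∅ := by
  exact rc_main ((∑ y ∈ C, 2 ^ rcEnc y) + 1) C (by omega) hC
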